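/- Let P_1,…,P_N be orthogonal projections onto subspaces of EuclideanSpace ℝ (Fin n) and let p_1,…,p_N ∈ [1,∞). Suppose that for every a with ‖a‖ ≤ 1: Σ_{j=1}^N (1/p_j) ψ(‖P_j a‖) ≤ ψ(‖a‖). Then Σ_{j=1}^N (1/p_j) P_j ≤ I in the Loewner order. (This follows since ψ(x) = x² + O(x⁴) as x → 0.) -/

import Mathlib

/-- `ψ(x) = (1/2)[(1+x) log(1+x) + (1-x) log(1-x)]`, with the convention `0 · log 0 = 0`
(automatic since `Real.log 0 = 0`). -/
noncomputable def psi (x : ℝ) : ℝ :=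
  (1 / 2) * ((1 + x) * Real.log (1 + x) + (1 - x) * Real.log (1 - x))

lemma psi_approx {t : ℝ} (h0 : 0 ≤ t) (h1 : t ≤ 1/2) :
    |psi t - t^2/2| ≤ 2 * t^3 := by
  have hlt : |t| < 1 := by rw [abs_of_nonneg h0]; linarith
  have hlt' : |(-t)| < 1 := by rw [abs_neg]; exact hlt
  have hB := Real.abs_log_sub_add_sum_range_le hlt 2
  have hA := Real.abs_log_sub_add_sum_range_le hlt' 2
  rw [abs_of_nonneg h0] at hB
  rw [abs_neg, abs_of_nonneg h0, show (1:ℝ) - -t = 1 + t by ring] at hA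
  simp only [Finset.sum_range_succ, Finset.sum_range_zero, zero_add, pow_one,
    Nat.cast_zero, Nat.cast_one] at hA hB
  norm_num at hA hB
  rw [abs_le] at hA hB
  have hx : t^3 / (1-t) ≤ 2 * t^3 := by
    rw [div_le_iff₀ (by linarith)]
    nlinarith [pow_nonneg h0 3]
  have hxnn : 0 ≤ t^3 / (1-t) := div_nonneg (pow_nonneg h0 3) (by linarith)
  have p1 := mul_le_mul_of_nonneg_left hA.2 (show (0:ℝ) ≤ 1+t by linarith)
  have p2 := mul_le_mul_of_nonneg_left hA.1 (show (0:ℝ) ≤ 1+t by linarith)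
  have p3 := mul_le_mul_of_nonneg_left hB.2 (show (0:ℝ) ≤ 1-t by linarith)
  have p4 := mul_le_mul_of_nonneg_left hB.1 (show (0:ℝ) ≤ 1-t by linarith)
  rw [abs_le]
  unfold psi
  constructor <;> nlinarith [hx, hxnn, p1, p2, p3, p4]

/-- Necessity of the Loewner condition for the `ψ`-inequality: if
`Σ_j (1/p_j) ψ(‖P_j a‖) ≤ ψ(‖a‖)` for all `a` with `‖a‖ ≤ 1`, then
`Σ_j (1/p_j) P_j ≤ I` in the Loewner order. -/
theorem loewner_of_psi_subadditivity {n N : ℕ}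
    (V : Fin N → Submodule ℝ (EuclideanSpace ℝ (Fin n)))
    (p : Fin N → ℝ) (hp : ∀ j, 1 ≤ p j)
    (hpsi : ∀ a : EuclideanSpace ℝ (Fin n), ‖a‖ ≤ 1 →
      ∑ j, (1 / p j) * psi ‖((V j).orthogonalProjectionOnto a : EuclideanSpace ℝ (Fin n))‖ ≤
        psi ‖a‖) :
    ∀ x : EuclideanSpace ℝ (Fin n),
      ∑ j, (1 / p j) * ‖((V j).orthogonalProjectionOnto x : EuclideanSpace ℝ (Fin n))‖ ^ 2 ≤
        ‖x‖ ^ 2 := by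
  intro x
  set q : Fin N → ℝ := fun j => ‖((V j).orthogonalProjectionOnto x : EuclideanSpace ℝ (Fin n))‖
    with hq
  have hqnn : ∀ j, 0 ≤ q j := fun j => norm_nonneg _
  have hqle : ∀ j, q j ≤ ‖x‖ := by
    intro j
    calc q j = ‖(V j).orthogonalProjectionOnto x‖ := rfl
      _ ≤ ‖(V j).orthogonalProjectionOnto‖ * ‖x‖ := ((V j).orthogonalProjectionOnto).le_opNorm x
      _ ≤ 1 * ‖x‖ := by gcongr; exact (V j).orthogonalProjectionOnto_norm_le
      _ = ‖x‖ := one_mul _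
  have hpinn : ∀ j, 0 ≤ 1 / p j := fun j => div_nonneg zero_le_one (by linarith [hp j])
  set f : ℝ → ℝ := fun ε => ∑ j, (1 / p j) * (q j ^ 2 / 2 - 2 * ε * q j ^ 3) with hf
  set g : ℝ → ℝ := fun ε => ‖x‖ ^ 2 / 2 + 2 * ε * ‖x‖ ^ 3 with hg
  -- eventual inequality on 𝓝[>] 0
  set ε₀ : ℝ := 1 / (2 * (‖x‖ + 1)) with hε₀
  have hε₀pos : 0 < ε₀ := by positivity
  have hev : ∀ᶠ ε in nhdsWithin 0 (Set.Ioi 0), f ε ≤ g ε := by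
    filter_upwards [Ioc_mem_nhdsGT_of_mem (Set.mem_Ico.mpr ⟨le_refl (0:ℝ), hε₀pos⟩)]
      with ε hε
    obtain ⟨hεpos, hεle⟩ := hε
    have hxnn : (0:ℝ) ≤ ‖x‖ := norm_nonneg x
    have hεx : ε * ‖x‖ ≤ 1/2 := by
      rw [hε₀, le_div_iff₀ (by positivity)] at hεle
      nlinarith
    have hεq : ∀ j, ε * q j ≤ 1/2 := fun j => le_trans (by nlinarith [hqle j, hqnn j]) hεx
    have hεqnn : ∀ j, 0 ≤ ε * q j := fun j => by positivity
    -- norm of projection of ε • x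
    have hproj : ∀ j, ‖((V j).orthogonalProjectionOnto (ε • x) : EuclideanSpace ℝ (Fin n))‖
        = ε * q j := by
      intro j
      rw [map_smul]
      rw [Submodule.coe_smul, norm_smul, Real.norm_eq_abs, abs_of_pos hεpos]
    have hnorm_a : ‖ε • x‖ = ε * ‖x‖ := by
      rw [norm_smul, Real.norm_eq_abs, abs_of_pos hεpos]
    have hmain := hpsi (ε • x) (by rw [hnorm_a]; linarith)
    rw [hnorm_a] at hmain
    simp only [hproj] at hmain
    -- lower bound each term
    have hlow : ∑ j, (1 / p j) * ((ε * q j) ^ 2 / 2 - 2 * (ε * q j) ^ 3)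
        ≤ ∑ j, (1 / p j) * psi (ε * q j) := by
      apply Finset.sum_le_sum
      intro j _
      apply mul_le_mul_of_nonneg_left _ (hpinn j)
      have := (abs_le.mp (psi_approx (hεqnn j) (hεq j))).1
      linarith
    have hup : psi (ε * ‖x‖) ≤ (ε * ‖x‖) ^ 2 / 2 + 2 * (ε * ‖x‖) ^ 3 := by
      have := (abs_le.mp (psi_approx (by positivity) hεx)).2
      linarith
    have hchain : ∑ j, (1 / p j) * ((ε * q j) ^ 2 / 2 - 2 * (ε * q j) ^ 3)
        ≤ (ε * ‖x‖) ^ 2 / 2 + 2 * (ε * ‖x‖) ^ 3 := le_trans hlow (le_trans hmain hup)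
    have hlhs : ∑ j, (1 / p j) * ((ε * q j) ^ 2 / 2 - 2 * (ε * q j) ^ 3)
        = ε ^ 2 * f ε := by
      rw [hf, Finset.mul_sum]
      exact Finset.sum_congr rfl fun j _ => by ring
    have hrhs : (ε * ‖x‖) ^ 2 / 2 + 2 * (ε * ‖x‖) ^ 3 = ε ^ 2 * g ε := by
      rw [hg]; ring
    rw [hlhs, hrhs] at hchain
    exact le_of_mul_le_mul_left hchain (by positivity)
  -- limits
  have hft : Filter.Tendsto f (nhdsWithin 0 (Set.Ioi 0))
      (nhds (∑ j, (1 / p j) * (q j ^ 2 / 2))) := by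
    have hc : Continuous f := by
      apply continuous_finset_sum
      intro j _
      fun_prop
    have := (hc.tendsto 0).mono_left (nhdsWithin_le_nhds (s := Set.Ioi (0:ℝ)))
    simpa [hf] using this
  have hgt : Filter.Tendsto g (nhdsWithin 0 (Set.Ioi 0)) (nhds (‖x‖ ^ 2 / 2)) := by
    have hc : Continuous g := by fun_prop
    have := (hc.tendsto 0).mono_left (nhdsWithin_le_nhds (s := Set.Ioi (0:ℝ)))
    simpa [hg] using this
  have hfinal := le_of_tendsto_of_tendsto hft hgt hev
  have hhalf : ∑ j, (1 / p j) * (q j ^ 2 / 2) = (∑ j, (1 / p j) * q j ^ 2) / 2 := by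
    rw [Finset.sum_div]
    exact Finset.sum_congr rfl fun j _ => by ring
  rw [hhalf] at hfinal
  linarith
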